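/- Let U ⊆ ℝ² be open and let ξ, φ : ℝ² → ℝ² be three times continuously differentiable on U, with ξ divergence-free on U (∂₁ξ¹ + ∂₂ξ² = 0 at every point of U). Then the curl of the twice-iterated SALT operator is the twice-iterated transport of the curl: for every x ∈ U, curl(B_ξ(B_ξφ))(x) = (L_ξ(L_ξ(curl φ)))(x). -/

import Mathlib

noncomputable section

/-- Partial derivative in the first coordinate of a scalar function on `ℝ²`. -/
def pd1 (f : ℝ × ℝ → ℝ) (x : ℝ × ℝ) : ℝ := fderiv ℝ f x (1, 0)

/-- Partial derivative in the second coordinate of a scalar function on `ℝ²`. -/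
def pd2 (f : ℝ × ℝ → ℝ) (x : ℝ × ℝ) : ℝ := fderiv ℝ f x (0, 1)

/-- The transport operator `(L_ξ φ)^l = ∑_j ξ^j ∂_j φ^l` on vector fields over `ℝ²`. -/
def Ltrans (ξ φ : ℝ × ℝ → ℝ × ℝ) (x : ℝ × ℝ) : ℝ × ℝ :=
  ((ξ x).1 * pd1 (fun y => (φ y).1) x + (ξ x).2 * pd2 (fun y => (φ y).1) x,
   (ξ x).1 * pd1 (fun y => (φ y).2) x + (ξ x).2 * pd2 (fun y => (φ y).2) x)

/-- The transport operator `L_ξ w = ∑_j ξ^j ∂_j w` on scalar functions over `ℝ²`. -/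
def LtransScalar (ξ : ℝ × ℝ → ℝ × ℝ) (w : ℝ × ℝ → ℝ) (x : ℝ × ℝ) : ℝ :=
  (ξ x).1 * pd1 w x + (ξ x).2 * pd2 w x

/-- The operator `(T_ξ φ)^l = ∑_j φ^j ∂_l ξ^j` on vector fields over `ℝ²`. -/
def Tsalt (ξ φ : ℝ × ℝ → ℝ × ℝ) (x : ℝ × ℝ) : ℝ × ℝ :=
  ((φ x).1 * pd1 (fun y => (ξ y).1) x + (φ x).2 * pd1 (fun y => (ξ y).2) x,
   (φ x).1 * pd2 (fun y => (ξ y).1) x + (φ x).2 * pd2 (fun y => (ξ y).2) x)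

/-- The SALT operator `B_ξ φ = L_ξ φ + T_ξ φ`. -/
def SALT (ξ φ : ℝ × ℝ → ℝ × ℝ) (x : ℝ × ℝ) : ℝ × ℝ := Ltrans ξ φ x + Tsalt ξ φ x

/-- `curl f = ∂₁ f² - ∂₂ f¹` on `ℝ²`. -/
def curl2 (f : ℝ × ℝ → ℝ × ℝ) (x : ℝ × ℝ) : ℝ :=
  pd1 (fun y => (f y).2) x - pd2 (fun y => (f y).1) x

/-- `div f = ∂₁ f¹ + ∂₂ f²` on `ℝ²`. -/
def div2 (f : ℝ × ℝ → ℝ × ℝ) (x : ℝ × ℝ) : ℝ :=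
  pd1 (fun y => (f y).1) x + pd2 (fun y => (f y).2) x


variable {f g : ℝ × ℝ → ℝ} {x : ℝ × ℝ} {U : Set (ℝ × ℝ)}

lemma pd1_add (hf : DifferentiableAt ℝ f x) (hg : DifferentiableAt ℝ g x) :
    pd1 (fun y => f y + g y) x = pd1 f x + pd1 g x := by
  simp [pd1, fderiv_fun_add hf hg]

lemma pd2_add (hf : DifferentiableAt ℝ f x) (hg : DifferentiableAt ℝ g x) :
    pd2 (fun y => f y + g y) x = pd2 f x + pd2 g x := by
  simp [pd2, fderiv_fun_add hf hg]

lemma pd1_sub (hf : DifferentiableAt ℝ f x) (hg : DifferentiableAt ℝ g x) :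
    pd1 (fun y => f y - g y) x = pd1 f x - pd1 g x := by
  simp [pd1, fderiv_fun_sub hf hg]

lemma pd2_sub (hf : DifferentiableAt ℝ f x) (hg : DifferentiableAt ℝ g x) :
    pd2 (fun y => f y - g y) x = pd2 f x - pd2 g x := by
  simp [pd2, fderiv_fun_sub hf hg]

lemma pd1_mul (hf : DifferentiableAt ℝ f x) (hg : DifferentiableAt ℝ g x) :
    pd1 (fun y => f y * g y) x = f x * pd1 g x + g x * pd1 f x := by
  simp [pd1, fderiv_fun_mul hf hg]

lemma pd2_mul (hf : DifferentiableAt ℝ f x) (hg : DifferentiableAt ℝ g x) :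
    pd2 (fun y => f y * g y) x = f x * pd2 g x + g x * pd2 f x := by
  simp [pd2, fderiv_fun_mul hf hg]

lemma contDiffOn_pd1 {n m : ℕ} (hf : ContDiffOn ℝ n f U) (hU : IsOpen U) (h : m + 1 ≤ n) :
    ContDiffOn ℝ m (pd1 f) U :=
  (hf.fderiv_of_isOpen hU (by exact_mod_cast h)).clm_apply contDiffOn_const

lemma contDiffOn_pd2 {n m : ℕ} (hf : ContDiffOn ℝ n f U) (hU : IsOpen U) (h : m + 1 ≤ n) :
    ContDiffOn ℝ m (pd2 f) U :=
  (hf.fderiv_of_isOpen hU (by exact_mod_cast h)).clm_apply contDiffOn_const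

lemma diffAt_pd1 (hf : ContDiffOn ℝ 2 f U) (hU : IsOpen U) (hx : x ∈ U) :
    DifferentiableAt ℝ (pd1 f) x :=
  ((contDiffOn_pd1 (n := 2) (m := 1) hf hU (by norm_num)).contDiffAt
    (hU.mem_nhds hx)).differentiableAt (by norm_num)

lemma diffAt_pd2 (hf : ContDiffOn ℝ 2 f U) (hU : IsOpen U) (hx : x ∈ U) :
    DifferentiableAt ℝ (pd2 f) x :=
  ((contDiffOn_pd2 (n := 2) (m := 1) hf hU (by norm_num)).contDiffAt
    (hU.mem_nhds hx)).differentiableAt (by norm_num)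

lemma pd_symm (hf : ContDiffAt ℝ 2 f x) : pd1 (pd2 f) x = pd2 (pd1 f) x := by
  have hd : DifferentiableAt ℝ (fderiv ℝ f) x :=
    (hf.fderiv_right (m := 1) (by norm_num)).differentiableAt (by norm_num)
  have h1 : ∀ v w : ℝ × ℝ, fderiv ℝ (fun y => fderiv ℝ f y v) x w =
      fderiv ℝ (fderiv ℝ f) x w v := by
    intro v w
    rw [fderiv_clm_apply hd (differentiableAt_const v)]
    simp
  have hsymm := hf.isSymmSndFDerivAt (by simp [minSmoothness_of_isRCLikeNormedField])
  show fderiv ℝ (fun y => fderiv ℝ f y (0,1)) x (1,0) = fderiv ℝ (fun y => fderiv ℝ f y (1,0)) x (0,1)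
  rw [h1, h1, hsymm]

lemma pd1_expr {a b c d e f g h : ℝ × ℝ → ℝ} {x : ℝ × ℝ}
    (ha : DifferentiableAt ℝ a x) (hb : DifferentiableAt ℝ b x)
    (hc : DifferentiableAt ℝ c x) (hd : DifferentiableAt ℝ d x)
    (he : DifferentiableAt ℝ e x) (hf : DifferentiableAt ℝ f x)
    (hg : DifferentiableAt ℝ g x) (hh : DifferentiableAt ℝ h x) :
    pd1 (fun y => (a y * b y + c y * d y) + (e y * f y + g y * h y)) x =
      ((a x * pd1 b x + b x * pd1 a x) + (c x * pd1 d x + d x * pd1 c x)) +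
      ((e x * pd1 f x + f x * pd1 e x) + (g x * pd1 h x + h x * pd1 g x)) := by
  rw [pd1_add (f := fun y => a y * b y + c y * d y) (g := fun y => e y * f y + g y * h y) ((ha.mul hb).add (hc.mul hd)) ((he.mul hf).add (hg.mul hh)),
    pd1_add (f := fun y => a y * b y) (g := fun y => c y * d y) (ha.mul hb) (hc.mul hd), pd1_add (f := fun y => e y * f y) (g := fun y => g y * h y) (he.mul hf) (hg.mul hh),
    pd1_mul ha hb, pd1_mul hc hd, pd1_mul he hf, pd1_mul hg hh]

lemma pd2_expr {a b c d e f g h : ℝ × ℝ → ℝ} {x : ℝ × ℝ}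
    (ha : DifferentiableAt ℝ a x) (hb : DifferentiableAt ℝ b x)
    (hc : DifferentiableAt ℝ c x) (hd : DifferentiableAt ℝ d x)
    (he : DifferentiableAt ℝ e x) (hf : DifferentiableAt ℝ f x)
    (hg : DifferentiableAt ℝ g x) (hh : DifferentiableAt ℝ h x) :
    pd2 (fun y => (a y * b y + c y * d y) + (e y * f y + g y * h y)) x =
      ((a x * pd2 b x + b x * pd2 a x) + (c x * pd2 d x + d x * pd2 c x)) +
      ((e x * pd2 f x + f x * pd2 e x) + (g x * pd2 h x + h x * pd2 g x)) := by
  rw [pd2_add (f := fun y => a y * b y + c y * d y) (g := fun y => e y * f y + g y * h y) ((ha.mul hb).add (hc.mul hd)) ((he.mul hf).add (hg.mul hh)),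
    pd2_add (f := fun y => a y * b y) (g := fun y => c y * d y) (ha.mul hb) (hc.mul hd), pd2_add (f := fun y => e y * f y) (g := fun y => g y * h y) (he.mul hf) (hg.mul hh),
    pd2_mul ha hb, pd2_mul hc hd, pd2_mul he hf, pd2_mul hg hh]

lemma curl_SALT_step (U : Set (ℝ × ℝ)) (hU : IsOpen U) (ξ ψ : ℝ × ℝ → ℝ × ℝ)
    (hξ : ContDiffOn ℝ 2 ξ U) (hψ : ContDiffOn ℝ 2 ψ U)
    (hdiv : ∀ y ∈ U, div2 ξ y = 0) (x : ℝ × ℝ) (hx : x ∈ U) :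
    curl2 (SALT ξ ψ) x = LtransScalar ξ (curl2 ψ) x := by
  have hxn := hU.mem_nhds hx
  -- scalar components
  have ha : ContDiffOn ℝ 2 (fun y => (ξ y).1) U := contDiff_fst.comp_contDiffOn hξ
  have hb : ContDiffOn ℝ 2 (fun y => (ξ y).2) U := contDiff_snd.comp_contDiffOn hξ
  have hp : ContDiffOn ℝ 2 (fun y => (ψ y).1) U := contDiff_fst.comp_contDiffOn hψ
  have hq : ContDiffOn ℝ 2 (fun y => (ψ y).2) U := contDiff_snd.comp_contDiffOn hψ
  have haD : DifferentiableAt ℝ (fun y => (ξ y).1) x :=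
    (ha.contDiffAt hxn).differentiableAt two_ne_zero
  have hbD : DifferentiableAt ℝ (fun y => (ξ y).2) x :=
    (hb.contDiffAt hxn).differentiableAt two_ne_zero
  have hpD : DifferentiableAt ℝ (fun y => (ψ y).1) x :=
    (hp.contDiffAt hxn).differentiableAt two_ne_zero
  have hqD : DifferentiableAt ℝ (fun y => (ψ y).2) x :=
    (hq.contDiffAt hxn).differentiableAt two_ne_zero
  have e2 : (fun y => (SALT ξ ψ y).2) = fun y =>
      ((ξ y).1 * pd1 (fun z => (ψ z).2) y + (ξ y).2 * pd2 (fun z => (ψ z).2) y) +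
      ((ψ y).1 * pd2 (fun z => (ξ z).1) y + (ψ y).2 * pd2 (fun z => (ξ z).2) y) := rfl
  have e1 : (fun y => (SALT ξ ψ y).1) = fun y =>
      ((ξ y).1 * pd1 (fun z => (ψ z).1) y + (ξ y).2 * pd2 (fun z => (ψ z).1) y) +
      ((ψ y).1 * pd1 (fun z => (ξ z).1) y + (ψ y).2 * pd1 (fun z => (ξ z).2) y) := rfl
  have key2 := pd1_expr haD (diffAt_pd1 hq hU hx) hbD (diffAt_pd2 hq hU hx)
    hpD (diffAt_pd2 ha hU hx) hqD (diffAt_pd2 hb hU hx)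
  have key1 := pd2_expr haD (diffAt_pd1 hp hU hx) hbD (diffAt_pd2 hp hU hx)
    hpD (diffAt_pd1 ha hU hx) hqD (diffAt_pd1 hb hU hx)
  have hcurl : curl2 (SALT ξ ψ) x =
      (((ξ x).1 * pd1 (pd1 fun z => (ψ z).2) x + pd1 (fun z => (ψ z).2) x * pd1 (fun y => (ξ y).1) x) +
       ((ξ x).2 * pd1 (pd2 fun z => (ψ z).2) x + pd2 (fun z => (ψ z).2) x * pd1 (fun y => (ξ y).2) x) +
       (((ψ x).1 * pd1 (pd2 fun z => (ξ z).1) x + pd2 (fun z => (ξ z).1) x * pd1 (fun y => (ψ y).1) x) +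
        ((ψ x).2 * pd1 (pd2 fun z => (ξ z).2) x + pd2 (fun z => (ξ z).2) x * pd1 (fun y => (ψ y).2) x))) -
      (((ξ x).1 * pd2 (pd1 fun z => (ψ z).1) x + pd1 (fun z => (ψ z).1) x * pd2 (fun y => (ξ y).1) x) +
       ((ξ x).2 * pd2 (pd2 fun z => (ψ z).1) x + pd2 (fun z => (ψ z).1) x * pd2 (fun y => (ξ y).2) x) +
       (((ψ x).1 * pd2 (pd1 fun z => (ξ z).1) x + pd1 (fun z => (ξ z).1) x * pd2 (fun y => (ψ y).1) x) +
        ((ψ x).2 * pd2 (pd1 fun z => (ξ z).2) x + pd1 (fun z => (ξ z).2) x * pd2 (fun y => (ψ y).2) x))) := by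
    rw [curl2, e1, e2, key1, key2]
  -- RHS expansion
  have hcq : (curl2 ψ) = fun y => pd1 (fun z => (ψ z).2) y - pd2 (fun z => (ψ z).1) y := rfl
  have hrhs : LtransScalar ξ (curl2 ψ) x =
      (ξ x).1 * (pd1 (pd1 fun z => (ψ z).2) x - pd1 (pd2 fun z => (ψ z).1) x) +
      (ξ x).2 * (pd2 (pd1 fun z => (ψ z).2) x - pd2 (pd2 fun z => (ψ z).1) x) := by
    rw [LtransScalar, hcq, pd1_sub (diffAt_pd1 hq hU hx) (diffAt_pd2 hp hU hx),
      pd2_sub (diffAt_pd1 hq hU hx) (diffAt_pd2 hp hU hx)]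
  -- Clairaut
  have sa : pd1 (pd2 fun z => (ξ z).1) x = pd2 (pd1 fun z => (ξ z).1) x :=
    pd_symm (ha.contDiffAt hxn)
  have sb : pd1 (pd2 fun z => (ξ z).2) x = pd2 (pd1 fun z => (ξ z).2) x :=
    pd_symm (hb.contDiffAt hxn)
  have sp : pd1 (pd2 fun z => (ψ z).1) x = pd2 (pd1 fun z => (ψ z).1) x :=
    pd_symm (hp.contDiffAt hxn)
  have sq : pd1 (pd2 fun z => (ψ z).2) x = pd2 (pd1 fun z => (ψ z).2) x :=
    pd_symm (hq.contDiffAt hxn)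
  have hd0 := hdiv x hx
  rw [div2] at hd0
  rw [hcurl, hrhs, sa, sb, sp, sq]
  linear_combination (pd1 (fun z => (ψ z).2) x - pd2 (fun z => (ψ z).1) x) * hd0

lemma contDiffOn_SALT (U : Set (ℝ × ℝ)) (hU : IsOpen U) (ξ φ : ℝ × ℝ → ℝ × ℝ)
    (hξ : ContDiffOn ℝ 3 ξ U) (hφ : ContDiffOn ℝ 3 φ U) :
    ContDiffOn ℝ 2 (SALT ξ φ) U := by
  have ha : ContDiffOn ℝ 3 (fun y => (ξ y).1) U := contDiff_fst.comp_contDiffOn hξ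
  have hb : ContDiffOn ℝ 3 (fun y => (ξ y).2) U := contDiff_snd.comp_contDiffOn hξ
  have hp : ContDiffOn ℝ 3 (fun y => (φ y).1) U := contDiff_fst.comp_contDiffOn hφ
  have hq : ContDiffOn ℝ 3 (fun y => (φ y).2) U := contDiff_snd.comp_contDiffOn hφ
  have h32 : (2 : ℕ) + 1 ≤ 3 := by norm_num
  have c1 : ContDiffOn ℝ 2 (fun y => (SALT ξ φ y).1) U := by
    rw [show (fun y => (SALT ξ φ y).1) = fun y =>
      ((fun z => (ξ z).1) y * pd1 (fun z => (φ z).1) y + (fun z => (ξ z).2) y * pd2 (fun z => (φ z).1) y) +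
      ((fun z => (φ z).1) y * pd1 (fun z => (ξ z).1) y + (fun z => (φ z).2) y * pd1 (fun z => (ξ z).2) y) from rfl]
    exact (((ha.of_le (by norm_num)).mul (contDiffOn_pd1 hp hU h32)).add
      ((hb.of_le (by norm_num)).mul (contDiffOn_pd2 hp hU h32))).add
      (((hp.of_le (by norm_num)).mul (contDiffOn_pd1 ha hU h32)).add
      ((hq.of_le (by norm_num)).mul (contDiffOn_pd1 hb hU h32)))
  have c2 : ContDiffOn ℝ 2 (fun y => (SALT ξ φ y).2) U := by
    rw [show (fun y => (SALT ξ φ y).2) = fun y =>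
      ((fun z => (ξ z).1) y * pd1 (fun z => (φ z).2) y + (fun z => (ξ z).2) y * pd2 (fun z => (φ z).2) y) +
      ((fun z => (φ z).1) y * pd2 (fun z => (ξ z).1) y + (fun z => (φ z).2) y * pd2 (fun z => (ξ z).2) y) from rfl]
    exact (((ha.of_le (by norm_num)).mul (contDiffOn_pd1 hq hU h32)).add
      ((hb.of_le (by norm_num)).mul (contDiffOn_pd2 hq hU h32))).add
      (((hp.of_le (by norm_num)).mul (contDiffOn_pd2 ha hU h32)).add
      ((hq.of_le (by norm_num)).mul (contDiffOn_pd2 hb hU h32)))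
  exact (c1.prodMk c2 : ContDiffOn ℝ 2 (fun y => ((SALT ξ φ y).1, (SALT ξ φ y).2)) U)


/-- For `ξ, φ` three times continuously differentiable on an open set `U ⊆ ℝ²` with `ξ`
divergence-free on `U`, the curl of the twice-iterated SALT operator is the twice-iterated
transport of the curl: `curl (B_ξ (B_ξ φ)) = L_ξ (L_ξ (curl φ))` on `U`. -/
theorem curl_SALT_sq_of_divFree (U : Set (ℝ × ℝ)) (hU : IsOpen U) (ξ φ : ℝ × ℝ → ℝ × ℝ)
    (hξ : ContDiffOn ℝ 3 ξ U) (hφ : ContDiffOn ℝ 3 φ U)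
    (hdiv : ∀ y ∈ U, div2 ξ y = 0) (x : ℝ × ℝ) (hx : x ∈ U) :
    curl2 (fun y => SALT ξ (fun z => SALT ξ φ z) y) x =
      LtransScalar ξ (fun y => LtransScalar ξ (fun z => curl2 φ z) y) x := by
  have hξ2 : ContDiffOn ℝ 2 ξ U := hξ.of_le (by norm_num)
  have hS : ContDiffOn ℝ 2 (SALT ξ φ) U := contDiffOn_SALT U hU ξ φ hξ hφ
  have step1 : ∀ y ∈ U, curl2 (SALT ξ φ) y = LtransScalar ξ (curl2 φ) y :=
    fun y hy => curl_SALT_step U hU ξ φ hξ2 (hφ.of_le (by norm_num)) hdiv y hy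
  have step2 : curl2 (SALT ξ (SALT ξ φ)) x = LtransScalar ξ (curl2 (SALT ξ φ)) x :=
    curl_SALT_step U hU ξ (SALT ξ φ) hξ2 hS hdiv x hx
  have hev : curl2 (SALT ξ φ) =ᶠ[nhds x] LtransScalar ξ (curl2 φ) :=
    Filter.eventuallyEq_of_mem (hU.mem_nhds hx) step1
  have hfd : fderiv ℝ (curl2 (SALT ξ φ)) x = fderiv ℝ (LtransScalar ξ (curl2 φ)) x :=
    hev.fderiv_eq
  show curl2 (SALT ξ (SALT ξ φ)) x = LtransScalar ξ (LtransScalar ξ (curl2 φ)) x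
  rw [step2, LtransScalar, LtransScalar, pd1, pd2, hfd]
  rfl

end
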